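/- On the blowup X of P^2 at six points in general position, the classes of (−1)-curves (smooth rational curves with self-intersection −1) are exactly: the 6 exceptional curves, the strict transforms of the 15 lines through pairs of the points, and the strict transforms of the 6 conics through five of the points—27 in total. -/
import Mathlib


/-- The intersection form on `Pic X ≅ ℤ⁷` of the blowup of `ℙ²` in six points, in the
basis `H, E₁, …, E₆` with `H² = 1`, `Eᵢ² = −1`, `H·Eᵢ = 0`. -/
def picInter (D D' : Fin 7 → ℤ) : ℤ :=
  D 0 * D' 0 - ∑ i : Fin 6, D i.succ * D' i.succ

/-- The canonical class `K_X = −3H + Σ Eᵢ`. -/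
def canonicalClass : Fin 7 → ℤ := ![-3, 1, 1, 1, 1, 1, 1]

/-- The class of the exceptional curve `Eᵢ`. -/
def excClass (i : Fin 6) : Fin 7 → ℤ := fun l => if l = i.succ then 1 else 0

/-- The class `H − Eᵢ − Eⱼ` of the strict transform of the line through two points. -/
def lineClass (i j : Fin 6) : Fin 7 → ℤ :=
  fun l => if l = 0 then 1 else if l = i.succ ∨ l = j.succ then -1 else 0

/-- The class `2H − Σ_{l ≠ i} E_l` of the strict transform of the conic through five
of the six points (omitting the `i`-th). -/
def conicClass (i : Fin 6) : Fin 7 → ℤ :=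
  fun l => if l = 0 then 2 else if l = i.succ then 0 else -1

lemma blowup_aux_nonneg (a : ℤ) : 0 ≤ a * (a + 1) := by
  rcases le_or_gt 0 a with h | h
  · exact mul_nonneg h (by omega)
  · nlinarith [mul_nonneg (by omega : (0:ℤ) ≤ -a) (by omega : (0:ℤ) ≤ -(a+1))]

lemma blowup_aux_nonneg' (a : ℤ) : 0 ≤ a * (a - 1) := by
  rcases le_or_gt 1 a with h | h
  · exact mul_nonneg (by omega) (by omega)
  · rcases le_or_gt a 0 with h' | h'
    · nlinarith [mul_nonneg (by omega : (0:ℤ) ≤ -a) (by omega : (0:ℤ) ≤ -(a-1))]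
    · nlinarith

lemma blowup_count_pos (a : Fin 6 → ℤ) (hz : ∀ i, a i = 0 ∨ a i = 1) :
    ∑ i, a i = (Finset.univ.filter fun i => a i = 1).card := by
  have h : ∀ i ∈ Finset.univ, a i = (if a i = 1 then (1:ℤ) else 0) := by
    intro i _; rcases hz i with h | h <;> simp [h]
  rw [Finset.sum_congr rfl h, Finset.sum_boole]

lemma blowup_count_neg (a : Fin 6 → ℤ) (hz : ∀ i, a i = 0 ∨ a i = -1) :
    ∑ i, a i = -(Finset.univ.filter fun i => a i = -1).card := by
  have h : ∀ i ∈ Finset.univ, a i = -(if a i = -1 then (1:ℤ) else 0) := by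
    intro i _; rcases hz i with h | h <;> simp [h]
  rw [Finset.sum_congr rfl h, Finset.sum_neg_distrib, Finset.sum_boole]

lemma blowup_classify (D : Fin 7 → ℤ)
    (h1 : picInter D D = -1) (h2 : picInter D canonicalClass = -1) :
    (∃ i, excClass i = D) ∨ (∃ i j : Fin 6, i ≠ j ∧ D = lineClass i j) ∨
    (∃ i, conicClass i = D) := by
  have hK0 : canonicalClass 0 = -3 := rfl
  have hK : ∀ i : Fin 6, canonicalClass i.succ = 1 := by decide
  unfold picInter at h1 h2
  rw [hK0, Finset.sum_congr rfl (fun i _ => by rw [hK i, mul_one])] at h2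
  set d := D 0 with hd
  have hs : ∑ i : Fin 6, D i.succ = -3 * d + 1 := by linarith
  have hq : ∑ i : Fin 6, D i.succ * D i.succ = d * d + 1 := by linarith
  -- Cauchy–Schwarz bound on d
  have cs := sq_sum_le_card_mul_sum_sq (s := (Finset.univ : Finset (Fin 6)))
    (f := fun i => D i.succ)
  simp only [Finset.card_univ, Fintype.card_fin, pow_two, Nat.cast_ofNat] at cs
  rw [hs, hq] at cs
  have hlow : -8 ≤ 12 * d := by nlinarith [sq_nonneg (d + 1)]
  have hhigh : 12 * d ≤ 32 := by nlinarith [sq_nonneg (d - 3)]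
  have hdrange : d = 0 ∨ d = 1 ∨ d = 2 := by omega
  rcases hdrange with h0 | h1' | h2'
  · -- d = 0 : exceptional curve
    rw [h0] at hs hq
    have hzero : ∑ i : Fin 6, D i.succ * (D i.succ - 1) = 0 := by
      have := Finset.sum_sub_distrib (s := (Finset.univ : Finset (Fin 6)))
        (f := fun i => D i.succ * D i.succ) (g := fun i => D i.succ)
      calc ∑ i : Fin 6, D i.succ * (D i.succ - 1)
          = ∑ i : Fin 6, (D i.succ * D i.succ - D i.succ) := by
            exact Finset.sum_congr rfl fun i _ => by ring
        _ = 0 := by rw [this, hs, hq]; ring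
    have heach := (Finset.sum_eq_zero_iff_of_nonneg
      (fun i _ => blowup_aux_nonneg' (D i.succ))).1 hzero
    have hz : ∀ i : Fin 6, D i.succ = 0 ∨ D i.succ = 1 := by
      intro i
      have := heach i (Finset.mem_univ i)
      rcases mul_eq_zero.1 this with h | h
      · exact Or.inl h
      · exact Or.inr (by omega)
    have hcount := blowup_count_pos (fun i => D i.succ) hz
    rw [hs] at hcount
    norm_num at hcount
    have hcard : ((Finset.univ : Finset (Fin 6)).filter fun i => D i.succ = 1).card = 1 := by omega
    obtain ⟨i, hi⟩ := Finset.card_eq_one.1 hcard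
    refine Or.inl ⟨i, funext fun l => ?_⟩
    have hmem : ∀ k : Fin 6, D k.succ = 1 ↔ k = i := by
      intro k
      constructor
      · intro h
        have : k ∈ Finset.univ.filter fun i => D i.succ = 1 := by
          simp [Finset.mem_filter, h]
        rw [hi, Finset.mem_singleton] at this; exact this
      · intro h
        have hk' : k ∈ ({i} : Finset (Fin 6)) := Finset.mem_singleton.2 h
        rw [← hi] at hk'
        exact (Finset.mem_filter.1 hk').2
    refine Fin.cases ?_ ?_ l
    · simp [excClass, (Fin.succ_ne_zero i).symm, ← hd, h0]
    · intro k
      by_cases hk : k = i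
      · subst hk; simp [excClass, (hmem k).2 rfl]
      · have : D k.succ ≠ 1 := fun h => hk ((hmem k).1 h)
        have h0k : D k.succ = 0 := by rcases hz k with h | h; exact h; exact absurd h this
        simp [excClass, h0k, hk]
  · -- d = 1 : line
    rw [h1'] at hs hq
    have hzero : ∑ i : Fin 6, D i.succ * (D i.succ + 1) = 0 := by
      have := Finset.sum_add_distrib (s := (Finset.univ : Finset (Fin 6)))
        (f := fun i => D i.succ * D i.succ) (g := fun i => D i.succ)
      calc ∑ i : Fin 6, D i.succ * (D i.succ + 1)
          = ∑ i : Fin 6, (D i.succ * D i.succ + D i.succ) := by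
            exact Finset.sum_congr rfl fun i _ => by ring
        _ = 0 := by rw [this, hs, hq]; ring
    have heach := (Finset.sum_eq_zero_iff_of_nonneg
      (fun i _ => blowup_aux_nonneg (D i.succ))).1 hzero
    have hz : ∀ i : Fin 6, D i.succ = 0 ∨ D i.succ = -1 := by
      intro i
      have := heach i (Finset.mem_univ i)
      rcases mul_eq_zero.1 this with h | h
      · exact Or.inl h
      · exact Or.inr (by omega)
    have hcount := blowup_count_neg (fun i => D i.succ) hz
    rw [hs] at hcount
    norm_num at hcount
    have hcard : ((Finset.univ : Finset (Fin 6)).filter fun i => D i.succ = -1).card = 2 := by omega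
    obtain ⟨i, j, hij, hT⟩ := Finset.card_eq_two.1 hcard
    have hmem : ∀ k : Fin 6, D k.succ = -1 ↔ (k = i ∨ k = j) := by
      intro k
      constructor
      · intro h
        have : k ∈ Finset.univ.filter fun l => D l.succ = -1 := by
          simp [Finset.mem_filter, h]
        rw [hT] at this; simpa using this
      · intro h
        have : k ∈ ({i, j} : Finset (Fin 6)) := by simpa using h
        rw [← hT] at this
        exact (Finset.mem_filter.1 this).2
    refine Or.inr (Or.inl ⟨i, j, hij, funext fun l => ?_⟩)
    refine Fin.cases ?_ ?_ l
    · simp [lineClass, ← hd, h1']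
    · intro k
      by_cases hk : k = i ∨ k = j
      · have hval : D k.succ = -1 := (hmem k).2 hk
        have : k.succ = i.succ ∨ k.succ = j.succ := by
          rcases hk with h | h <;> [left; right] <;> rw [h]
        simp [lineClass, Fin.succ_ne_zero k, hk, hval]
      · have : D k.succ ≠ -1 := fun h => hk ((hmem k).1 h)
        have h0k : D k.succ = 0 := by rcases hz k with h | h; exact h; exact absurd h this
        have hne : ¬(k.succ = i.succ ∨ k.succ = j.succ) := by
          rintro (h | h)
          · exact hk (Or.inl (Fin.succ_injective 6 h))
          · exact hk (Or.inr (Fin.succ_injective 6 h))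
        simp [lineClass, Fin.succ_ne_zero k, hk, h0k]
  · -- d = 2 : conic
    rw [h2'] at hs hq
    have hzero : ∑ i : Fin 6, D i.succ * (D i.succ + 1) = 0 := by
      have := Finset.sum_add_distrib (s := (Finset.univ : Finset (Fin 6)))
        (f := fun i => D i.succ * D i.succ) (g := fun i => D i.succ)
      calc ∑ i : Fin 6, D i.succ * (D i.succ + 1)
          = ∑ i : Fin 6, (D i.succ * D i.succ + D i.succ) := by
            exact Finset.sum_congr rfl fun i _ => by ring
        _ = 0 := by rw [this, hs, hq]; ring
    have heach := (Finset.sum_eq_zero_iff_of_nonneg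
      (fun i _ => blowup_aux_nonneg (D i.succ))).1 hzero
    have hz : ∀ i : Fin 6, D i.succ = 0 ∨ D i.succ = -1 := by
      intro i
      have := heach i (Finset.mem_univ i)
      rcases mul_eq_zero.1 this with h | h
      · exact Or.inl h
      · exact Or.inr (by omega)
    have hcount := blowup_count_neg (fun i => D i.succ) hz
    rw [hs] at hcount
    norm_num at hcount
    have hcard : ((Finset.univ : Finset (Fin 6)).filter fun i => D i.succ = -1).card = 5 := by omega
    have hcardc : ((Finset.univ : Finset (Fin 6)).filter fun i => ¬(D i.succ = -1)).card = 1 := by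
      have := Finset.card_filter_add_card_filter_not
        (s := (Finset.univ : Finset (Fin 6))) (p := fun i => D i.succ = -1)
      simp [Finset.card_univ] at this
      omega
    obtain ⟨i, hi⟩ := Finset.card_eq_one.1 hcardc
    have hmem : ∀ k : Fin 6, D k.succ ≠ -1 ↔ k = i := by
      intro k
      constructor
      · intro h
        have : k ∈ Finset.univ.filter fun l => ¬(D l.succ = -1) := by
          simp [Finset.mem_filter, h]
        rw [hi, Finset.mem_singleton] at this; exact this
      · intro h
        have hk' : k ∈ ({i} : Finset (Fin 6)) := Finset.mem_singleton.2 h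
        rw [← hi] at hk'
        exact (Finset.mem_filter.1 hk').2
    refine Or.inr (Or.inr ⟨i, funext fun l => ?_⟩)
    refine Fin.cases ?_ ?_ l
    · simp [conicClass, (Fin.succ_ne_zero i).symm, ← hd, h2']
    · intro k
      by_cases hk : k = i
      · subst hk
        have : D k.succ ≠ -1 := (hmem k).2 rfl
        have h0k : D k.succ = 0 := by rcases hz k with h | h; exact h; exact absurd h this
        simp [conicClass, h0k, Fin.succ_ne_zero k]
      · have hval : D k.succ = -1 := by
          by_contra h
          exact hk ((hmem k).1 h)
        simp [conicClass, Fin.succ_ne_zero k, hval, hk]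

/-- On the blowup `X` of `ℙ²` at six points in general position, the
`(−1)`-curve classes `D` (those with `D² = −1` and `D·K_X = −1` in
`Pic X ≅ ℤ⁷ = ⟨H, E₁, …, E₆⟩`) are exactly the 6 exceptional classes, the 15 classes of
lines through pairs of points, and the 6 classes of conics through five of the points —
27 in total. -/
theorem minus_one_classes_of_blowup_six_points :
    {D : Fin 7 → ℤ | picInter D D = -1 ∧ picInter D canonicalClass = -1} =
      (Set.range excClass ∪
        {D | ∃ i j : Fin 6, i ≠ j ∧ D = lineClass i j} ∪
        Set.range conicClass) ∧
    {D : Fin 7 → ℤ | picInter D D = -1 ∧ picInter D canonicalClass = -1}.ncard = 27 := by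
  have heq : {D : Fin 7 → ℤ | picInter D D = -1 ∧ picInter D canonicalClass = -1} =
      (Set.range excClass ∪
        {D | ∃ i j : Fin 6, i ≠ j ∧ D = lineClass i j} ∪
        Set.range conicClass) := by
    ext D
    constructor
    · rintro ⟨h1, h2⟩
      rcases blowup_classify D h1 h2 with h | h | h
      · exact Or.inl (Or.inl h)
      · exact Or.inl (Or.inr h)
      · exact Or.inr h
    · have hexc : ∀ i : Fin 6, picInter (excClass i) (excClass i) = -1 ∧
          picInter (excClass i) canonicalClass = -1 := by decide
      have hline : ∀ i j : Fin 6, i ≠ j → picInter (lineClass i j) (lineClass i j) = -1 ∧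
          picInter (lineClass i j) canonicalClass = -1 := by decide
      have hconic : ∀ i : Fin 6, picInter (conicClass i) (conicClass i) = -1 ∧
          picInter (conicClass i) canonicalClass = -1 := by decide
      rintro ((⟨i, rfl⟩ | ⟨i, j, hij, rfl⟩) | ⟨i, rfl⟩)
      · exact hexc i
      · exact hline i j hij
      · exact hconic i
  refine ⟨heq, ?_⟩
  rw [heq]
  have hS : (Set.range excClass ∪
        {D | ∃ i j : Fin 6, i ≠ j ∧ D = lineClass i j} ∪
        Set.range conicClass) =
      ↑((Finset.univ.image excClass) ∪
        (((Finset.univ : Finset (Fin 6 × Fin 6)).filter fun p => p.1 ≠ p.2).image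
          fun p => lineClass p.1 p.2) ∪
        (Finset.univ.image conicClass)) := by
    ext D
    simp only [Set.mem_union, Set.mem_range, Set.mem_setOf_eq, Finset.coe_union,
      Finset.mem_coe, Finset.mem_union, Finset.mem_image, Finset.mem_filter,
      Finset.mem_univ, true_and, Prod.exists]
    constructor
    · rintro ((⟨i, h⟩ | ⟨i, j, hij, h⟩) | ⟨i, h⟩)
      · exact Or.inl (Or.inl ⟨i, h⟩)
      · exact Or.inl (Or.inr ⟨i, j, hij, h.symm⟩)
      · exact Or.inr ⟨i, h⟩
    · rintro ((⟨i, h⟩ | ⟨i, j, hij, h⟩) | ⟨i, h⟩)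
      · exact Or.inl (Or.inl ⟨i, h⟩)
      · exact Or.inl (Or.inr ⟨i, j, hij, h.symm⟩)
      · exact Or.inr ⟨i, h⟩
  rw [hS, Set.ncard_coe_finset]
  decide
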